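/- The Dyck language over {a,b} is not accepted by any LOWJFA (left one-way jumping finite automaton). -/

import Mathlib

open List

/-- Two-letter alphabet. -/
inductive AB : Type | a | b
  deriving DecidableEq, Repr

/-- Three-letter alphabet. -/
inductive ABC : Type | a | b | c
  deriving DecidableEq, Repr

instance : Fintype AB := ⟨⟨{AB.a, AB.b}, by decide⟩, by intro x; cases x <;> decide⟩
instance : Fintype ABC := ⟨⟨{ABC.a, ABC.b, ABC.c}, by decide⟩, by intro x; cases x <;> decide⟩

/-- The Dyck language over the two designated letters `a` (open) and `b` (close):
balanced words using only `a` and `b`. -/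
def Dyck {α : Type} [DecidableEq α] (a b : α) : Set (List α) :=
  {w | (∀ x ∈ w, x = a ∨ x = b) ∧ w.count a = w.count b ∧
       ∀ u, u <+: w → u.count b ≤ u.count a}

/-- `u` contains no word from `S` as a subword (infix). -/
def NoSub {α : Type} (S : Set (List α)) (u : List α) : Prop :=
  ¬ ∃ w ∈ S, w <:+: u

/-! ### Right one-way jumping finite automata -/

structure ROWJFA (α σ : Type) where
  start : σ
  accept : Set σ
  rules : Set (σ × α × σ)
  det : ∀ p a q q', (p, a, q) ∈ rules → (p, a, q') ∈ rules → q = q'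

namespace ROWJFA
variable {α σ : Type}

def sig (A : ROWJFA α σ) (p : σ) : Set α := {a | ∃ q, (p, a, q) ∈ A.rules}

/-- `p x a y ↷ q y x` when `(p,a,q) ∈ R` and `x ∈ (Σ∖Σ_p)*`. -/
inductive Step (A : ROWJFA α σ) : σ × List α → σ × List α → Prop
  | jump {p q : σ} {a : α} (x y : List α) :
      (p, a, q) ∈ A.rules → (∀ b ∈ x, b ∉ A.sig p) →
      Step A (p, x ++ a :: y) (q, y ++ x)

def language (A : ROWJFA α σ) : Set (List α) :=
  {w | ∃ qf ∈ A.accept, Relation.ReflTransGen (Step A) (A.start, w) (qf, [])}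

end ROWJFA

def ROWJ {α : Type} (L : Set (List α)) : Prop :=
  ∃ (σ : Type) (_ : Finite σ) (A : ROWJFA α σ), A.language = L

/-! ### Left one-way jumping finite automata -/

structure LOWJFA (α σ : Type) where
  start : σ
  accept : Set σ
  /-- A rule `(q, a, p)` means: from state `p`, delete `a`, move to state `q`. -/
  rules : Set (σ × α × σ)
  det : ∀ p a q q', (q, a, p) ∈ rules → (q', a, p) ∈ rules → q = q'

namespace LOWJFA
variable {α σ : Type}

def sig (A : LOWJFA α σ) (p : σ) : Set α := {a | ∃ q, (q, a, p) ∈ A.rules}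

/-- `x y q ↶ y a x p` when `(q,a,p) ∈ R` and `x ∈ (Σ∖Σ_p)*`;
configurations are in `Σ* Q`. -/
inductive Step (A : LOWJFA α σ) : List α × σ → List α × σ → Prop
  | jump {p q : σ} {a : α} (x y : List α) :
      (q, a, p) ∈ A.rules → (∀ b ∈ x, b ∉ A.sig p) →
      Step A (y ++ a :: x, p) (x ++ y, q)

def language (A : LOWJFA α σ) : Set (List α) :=
  {w | ∃ qf ∈ A.accept, Relation.ReflTransGen (Step A) (w, A.start) ([], qf)}

end LOWJFA

def LOWJ {α : Type} (L : Set (List α)) : Prop :=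
  ∃ (σ : Type) (_ : Finite σ) (A : LOWJFA α σ), A.language = L

/-! ### Generalized right linear one-way jumping finite automata -/

structure GRLOWJFA (α σ : Type) where
  start : σ
  accept : Set σ
  rules : Set (σ × List α × σ)
  finite : rules.Finite
  ne : ∀ r ∈ rules, r.2.1 ≠ ([] : List α)
  det : ∀ p w q q', (p, w, q) ∈ rules → (p, w, q') ∈ rules → q = q'

namespace GRLOWJFA
variable {α σ : Type}

def sig (A : GRLOWJFA α σ) (p : σ) : Set (List α) := {w | ∃ q, (p, w, q) ∈ A.rules}

/-- Configurations are triples `(t, p, v)` representing `t p v ∈ Σ* Q Σ*`. -/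
inductive Step (A : GRLOWJFA α σ) :
    List α × σ × List α → List α × σ × List α → Prop
  /-- `t p u x v ↷ t u q v`. -/
  | rule {p q : σ} {x : List α} (t u v : List α) :
      (p, x, q) ∈ A.rules →
      NoSub (A.sig p) u →
      (¬ ∃ u₂ x₁ : List α, u₂ ≠ [] ∧ x₁ ≠ [] ∧ u₂ <:+ u ∧ x₁ <+: x ∧ u₂ ++ x₁ = x) →
      Step A (t, p, u ++ x ++ v) (t ++ u, q, v)
  /-- `x p y ↷ p x y`. -/
  | ret {p : σ} (x y : List α) :
      x ≠ [] → NoSub (A.sig p) y →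
      Step A (x, p, y) ([], p, x ++ y)

def language (A : GRLOWJFA α σ) : Set (List α) :=
  {w | ∃ qf ∈ A.accept, Relation.ReflTransGen (Step A) ([], A.start, w) ([], qf, [])}

end GRLOWJFA

def GRLOWJ {α : Type} (L : Set (List α)) : Prop :=
  ∃ (σ : Type) (_ : Finite σ) (A : GRLOWJFA α σ), A.language = L

/-! ### Generalized left linear one-way jumping finite automata -/

structure GLLOWJFA (α σ : Type) where
  start : σ
  accept : Set σ
  /-- A rule `(q, w, p)` means: from state `p`, delete `w`, move to state `q`. -/
  rules : Set (σ × List α × σ)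
  finite : rules.Finite
  ne : ∀ r ∈ rules, r.2.1 ≠ ([] : List α)
  det : ∀ p w q q', (q, w, p) ∈ rules → (q', w, p) ∈ rules → q = q'

namespace GLLOWJFA
variable {α σ : Type}

def sig (A : GLLOWJFA α σ) (p : σ) : Set (List α) := {w | ∃ q, (q, w, p) ∈ A.rules}

/-- Configurations are triples `(v, p, t)` representing `v p t ∈ Σ* Q Σ*`. -/
inductive Step (A : GLLOWJFA α σ) :
    List α × σ × List α → List α × σ × List α → Prop
  /-- `v q u t ↶ v x u p t`. -/
  | rule {p q : σ} {x : List α} (t u v : List α) :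
      (q, x, p) ∈ A.rules →
      NoSub (A.sig p) u →
      (¬ ∃ x₂ u₁ : List α, x₂ ≠ [] ∧ u₁ ≠ [] ∧ x₂ <:+ x ∧ u₁ <+: u ∧ x₂ ++ u₁ = x) →
      Step A (v ++ x ++ u, p, t) (v, q, u ++ t)
  /-- `y x p ↶ y p x`. -/
  | ret {p : σ} (x y : List α) :
      x ≠ [] → NoSub (A.sig p) y →
      Step A (y, p, x) (y ++ x, p, [])

def language (A : GLLOWJFA α σ) : Set (List α) :=
  {w | ∃ qf ∈ A.accept, Relation.ReflTransGen (Step A) (w, A.start, []) ([], qf, [])}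

end GLLOWJFA

def GLLOWJ {α : Type} (L : Set (List α)) : Prop :=
  ∃ (σ : Type) (_ : Finite σ) (A : GLLOWJFA α σ), A.language = L


section DyckNotLOWJ

open Relation

variable {σ : Type} (A : LOWJFA AB σ)

private lemma sig_of_rule {q a p} (h : (q, a, p) ∈ A.rules) : a ∈ A.sig p := ⟨q, h⟩

private lemma step_inv {c d} (h : A.Step c d) :
    ∃ p q a x y, (q, a, p) ∈ A.rules ∧ (∀ b ∈ x, b ∉ A.sig p) ∧
      c = (y ++ a :: x, p) ∧ d = (x ++ y, q) := by
  cases h with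
  | jump x y hr hx => exact ⟨_, _, _, x, y, hr, hx, rfl, rfl⟩

private lemma no_step_nil {p : σ} {c} (h : A.Step ([], p) c) : False := by
  obtain ⟨p', q, a, x, y, -, -, hc, -⟩ := step_inv A h
  have : ([] : List AB) = y ++ a :: x := congrArg Prod.fst hc
  simp at this

private lemma decomp_aux {p : σ} {a a' : AB} {x x' : List AB}
    (hx' : ∀ b ∈ x', b ∉ A.sig p)
    (ha : a ∈ A.sig p)
    (hs : a :: x <:+ a' :: x') : a :: x = a' :: x' ∨ False := by
  rcases List.suffix_cons_iff.mp hs with h | h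
  · exact Or.inl h
  · exact absurd ha (hx' a (h.mem (List.mem_cons_self (a := a) (l := x)))).elim

private lemma step_det {w : List AB} {p : σ} {c1 c2}
    (h1 : A.Step (w, p) c1) (h2 : A.Step (w, p) c2) : c1 = c2 := by
  obtain ⟨p1, q, a, x, y, hr, hx, hc, hd⟩ := step_inv A h1
  obtain ⟨p2, q', a', x', y', hr', hx', hc', hd'⟩ := step_inv A h2
  obtain ⟨hw1, hp1⟩ := Prod.mk.injEq .. ▸ hc
  obtain ⟨hw2, hp2⟩ := Prod.mk.injEq .. ▸ hc'
  subst hp1; subst hp2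
  have e : y ++ a :: x = y' ++ a' :: x' := hw1 ▸ hw2
  have hsx : a :: x <:+ y ++ a :: x := List.suffix_append y (a :: x)
  have hsx' : a' :: x' <:+ y ++ a :: x := e ▸ List.suffix_append y' (a' :: x')
  have hxx : a :: x = a' :: x' := by
    rcases List.suffix_or_suffix_of_suffix hsx hsx' with h | h
    · rcases decomp_aux A hx' (sig_of_rule A hr) h with h | h
      · exact h
      · exact h.elim
    · rcases decomp_aux A hx (sig_of_rule A hr') h with h | h
      · exact h.symm
      · exact h.elim
  obtain ⟨haa, hxe⟩ : a = a' ∧ x = x' := by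
    injection hxx with e1 e2; exact ⟨e1, e2⟩
  subst haa; subst hxe
  have hy : y = y' := List.append_cancel_right e
  subst hy
  have hq : q = q' := A.det p a q q' hr hr'
  subst hq
  rw [hd, hd']

private lemma step_acc {c d : List AB × σ} {qf : σ} (hs : A.Step c d)
    (hf : ReflTransGen A.Step c ([], qf)) : ReflTransGen A.Step d ([], qf) := by
  rcases hf.cases_head with heq | ⟨e, he, hrest⟩
  · subst heq; exact (no_step_nil A hs).elim
  · rwa [step_det A hs he]

private lemma acc_of_reach {c c' : List AB × σ} {qf : σ}
    (h : ReflTransGen A.Step c c') (hf : ReflTransGen A.Step c ([], qf)) :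
    ReflTransGen A.Step c' ([], qf) := by
  induction h using Relation.ReflTransGen.head_induction_on with
  | refl => exact hf
  | head hs _ ih => exact ih (step_acc A hs hf)

open Classical in
/-- The b-deleting transition function (junk value if no rule). -/
noncomputable def db (A : LOWJFA AB σ) (p : σ) : σ :=
  if h : ∃ q, (q, AB.b, p) ∈ A.rules then h.choose else p

private lemma db_rule {p : σ} (h : ∃ q, (q, AB.b, p) ∈ A.rules) :
    (db A p, AB.b, p) ∈ A.rules := by
  classical
  rw [db, dif_pos h]
  exact h.choose_spec

/-- Run consuming `j` trailing b's. -/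
private lemma runb (u : List AB) :
    ∀ (j : ℕ) (p : σ), (∀ i < j, ∃ q, (q, AB.b, (db A)^[i] p) ∈ A.rules) →
      ReflTransGen A.Step (u ++ List.replicate j AB.b, p) (u, (db A)^[j] p) := by
  intro j
  induction j with
  | zero => intro p _; simpa using Relation.ReflTransGen.refl
  | succ j ih =>
    intro p hp
    have h0 : ∃ q, (q, AB.b, p) ∈ A.rules := by simpa using hp 0 (Nat.succ_pos j)
    have hstep : A.Step (u ++ List.replicate (j+1) AB.b, p)
        (u ++ List.replicate j AB.b, db A p) := by
      have := LOWJFA.Step.jump (A := A) (p := p) (q := db A p) (a := AB.b)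
        [] (u ++ List.replicate j AB.b) (db_rule A h0) (by simp)
      simpa [List.replicate_succ' (n := j) (a := AB.b), List.append_assoc] using this
    have htail : ReflTransGen A.Step (u ++ List.replicate j AB.b, db A p)
        (u, (db A)^[j] (db A p)) := by
      apply ih (db A p)
      intro i hi
      have := hp (i+1) (Nat.succ_lt_succ hi)
      simpa [Function.iterate_succ_apply] using this
    have : ReflTransGen A.Step (u ++ List.replicate (j+1) AB.b, p)
        (u, (db A)^[j] (db A p)) := ReflTransGen.head hstep htail
    simpa [Function.iterate_succ_apply] using this

private lemma dyck_anbn (n : ℕ) :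
    (List.replicate n AB.a ++ List.replicate n AB.b) ∈ Dyck AB.a AB.b := by
  refine ⟨?_, ?_, ?_⟩
  · intro x hx
    rcases List.mem_append.mp hx with h | h
    · exact Or.inl (List.eq_of_mem_replicate h)
    · exact Or.inr (List.eq_of_mem_replicate h)
  · simp [List.count_append, List.count_replicate]
  · intro u hu
    have hu' : u = List.take u.length (List.replicate n AB.a ++ List.replicate n AB.b) :=
      List.prefix_iff_eq_take.mp hu
    rw [hu']
    rw [List.take_append, List.take_replicate, List.take_replicate,
      List.length_replicate]
    simp only [List.count_append, List.count_replicate]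
    simp only [beq_self_eq_true, if_true, show (AB.b == AB.a) = false from by decide,
      show (AB.a == AB.b) = false from by decide, Bool.false_eq_true, if_false]
    simpa using min_le_min (Nat.sub_le u.length n) (le_refl n)

private lemma count_anbm (n m : ℕ) {w : List AB}
    (hw : w = List.replicate n AB.a ++ List.replicate m AB.b)
    (hd : w ∈ Dyck AB.a AB.b) : n = m := by
  obtain ⟨-, hc, -⟩ := hd
  subst hw
  simpa [List.count_append, List.count_replicate] using hc

end DyckNotLOWJ

theorem stmt_5 : ¬ LOWJ (Dyck AB.a AB.b) := by
  rintro ⟨σ, hfin, A, hL⟩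
  have hmem : ∀ w : List AB, w ∈ A.language ↔ w ∈ Dyck AB.a AB.b := fun w => by rw [hL]
  set f : ℕ → σ := fun k => (db A)^[k] A.start with hf
  by_cases hall : ∀ k, ∃ q, (q, AB.b, f k) ∈ A.rules
  · -- Case C: the b-chain never stops; pump the b's.
    obtain ⟨k, k', hne, heq⟩ := Finite.exists_ne_map_eq_of_infinite f
    -- run on a^k b^m reaches (a^k, f m)
    have hrun : ∀ m : ℕ, Relation.ReflTransGen A.Step
        (List.replicate k AB.a ++ List.replicate m AB.b, A.start)
        (List.replicate k AB.a, f m) := fun m =>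
      runb A (List.replicate k AB.a) m A.start (fun i _ => hall i)
    have hacc : ∃ qf ∈ A.accept, Relation.ReflTransGen A.Step
        (List.replicate k AB.a ++ List.replicate k AB.b, A.start) ([], qf) :=
      (hmem _).mpr (dyck_anbn k)
    obtain ⟨qf, hqf, hfr⟩ := hacc
    have h1 : Relation.ReflTransGen A.Step (List.replicate k AB.a, f k) ([], qf) :=
      acc_of_reach A (hrun k) hfr
    have h2 : (List.replicate k AB.a ++ List.replicate k' AB.b) ∈ A.language := by
      refine ⟨qf, hqf, ?_⟩
      exact Relation.ReflTransGen.trans (heq ▸ hrun k') h1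
    exact hne (count_anbm k k' rfl ((hmem _).mp h2))
  · push_neg at hall
    have hex : ∃ k, ¬ ∃ q, (q, AB.b, f k) ∈ A.rules := by
      obtain ⟨k, hk⟩ := hall
      exact ⟨k, fun h => h.elim fun q hq => hk q hq⟩
    classical
    set K := Nat.find hex with hK
    have hKb : ¬ ∃ q, (q, AB.b, f K) ∈ A.rules := Nat.find_spec hex
    have hlt : ∀ i < K, ∃ q, (q, AB.b, f i) ∈ A.rules := by
      intro i hi
      by_contra h
      exact Nat.find_min hex hi h
    -- run1 prefix: a^(K+1) b^(K+1)  →*  (a^(K+1) ++ [b], f K)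
    have hrun1 : Relation.ReflTransGen A.Step
        (List.replicate (K+1) AB.a ++ List.replicate (K+1) AB.b, A.start)
        (List.replicate (K+1) AB.a ++ [AB.b], f K) := by
      have := runb A (List.replicate (K+1) AB.a ++ [AB.b]) K A.start (fun i hi => hlt i hi)
      simpa [List.replicate_succ (n := K) (a := AB.b), List.append_assoc] using this
    have hacc1 : ∃ qf ∈ A.accept, Relation.ReflTransGen A.Step
        (List.replicate (K+1) AB.a ++ List.replicate (K+1) AB.b, A.start) ([], qf) :=
      (hmem _).mpr (dyck_anbn (K+1))
    obtain ⟨qf, hqf, hfr⟩ := hacc1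
    have haccK : Relation.ReflTransGen A.Step (List.replicate (K+1) AB.a ++ [AB.b], f K) ([], qf) :=
      acc_of_reach A hrun1 hfr
    by_cases hKa : ∃ q, (q, AB.a, f K) ∈ A.rules
    · -- Case A: f K deletes a; the extra-b word merges with the good run.
      obtain ⟨q1, hq1⟩ := hKa
      -- a-step from run1 config
      have hs1 : A.Step (List.replicate (K+1) AB.a ++ [AB.b], f K)
          (AB.b :: List.replicate K AB.a, q1) := by
        have := LOWJFA.Step.jump (A := A) (p := f K) (q := q1) (a := AB.a)
          [AB.b] (List.replicate K AB.a) hq1 ?hx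
        case hx =>
          intro b hb
          rcases List.mem_singleton.mp hb with rfl
          exact hKb
        simpa [List.replicate_succ' (n := K) (a := AB.a), List.append_assoc] using this
      have hacc2 : Relation.ReflTransGen A.Step (AB.b :: List.replicate K AB.a, q1) ([], qf) :=
        step_acc A hs1 haccK
      -- bad word w2 = b :: (a^(K+1) ++ b^K)
      have hrun2 : Relation.ReflTransGen A.Step
        ((AB.b :: List.replicate (K+1) AB.a) ++ List.replicate K AB.b, A.start)
        (AB.b :: List.replicate (K+1) AB.a, f K) :=
        runb A (AB.b :: List.replicate (K+1) AB.a) K A.start (fun i hi => hlt i hi)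
      have hs2 : A.Step (AB.b :: List.replicate (K+1) AB.a, f K)
          (AB.b :: List.replicate K AB.a, q1) := by
        have := LOWJFA.Step.jump (A := A) (p := f K) (q := q1) (a := AB.a)
          [] (AB.b :: List.replicate K AB.a) hq1 (by simp)
        simpa [List.replicate_succ' (n := K) (a := AB.a)] using this
      have hbad : ((AB.b :: List.replicate (K+1) AB.a) ++ List.replicate K AB.b)
          ∈ A.language := ⟨qf, hqf, Relation.ReflTransGen.trans hrun2 (Relation.ReflTransGen.head hs2 hacc2)⟩
      have hdyck := (hmem _).mp hbad
      obtain ⟨-, -, hpre⟩ := hdyck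
      have := hpre [AB.b] ⟨List.replicate (K+1) AB.a ++ List.replicate K AB.b, by simp⟩
      simp [List.count_cons, List.count_nil] at this
    · -- Case B: f K is stuck but the word is nonempty.
      rcases haccK.cases_head with heq | ⟨e, he, -⟩
      · have : List.replicate (K+1) AB.a ++ [AB.b] = ([] : List AB) :=
          congrArg Prod.fst heq
        simp at this
      · obtain ⟨p', q, a, x, y, hr, -, hc, -⟩ := step_inv A he
        have hp' : p' = f K := (congrArg Prod.snd hc).symm
        subst hp'
        cases a
        · exact hKa ⟨q, hr⟩
        · exact hKb ⟨q, hr⟩
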